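/- Let φ ∈ L¹(0,1), λ ∈ (0,1) and C₀ > 0 be such that φ(t) ≥ C₀ for a.e. t ∈ (λ,1). Then there exists R₁ > 0 such that for all α ∈ ℝ and n ∈ ℤ with |α| ≥ R₁ or |n| ≥ R₁, one has D(φ)(α,n) ≥ C₀ / (2(α² + n²π²)). -/

import Mathlib

open MeasureTheory Real Set

/-- `D(φ)(α,n) = ∫₀¹ e^{(α²+n²π²)(t−1)} φ(t) dt`. -/
noncomputable def Dker (φ : ℝ → ℝ) (α : ℝ) (n : ℤ) : ℝ :=
  ∫ t in Set.Ioo (0:ℝ) 1, Real.exp ((α^2 + (n:ℝ)^2 * Real.pi^2) * (t - 1)) * φ t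

section Aux
open Filter Topology

lemma exp_int' (μ lam : ℝ) (hμ : 0 < μ) (h : lam ≤ 1) :
    ∫ t in Set.Ioo lam 1, Real.exp (μ * (t - 1)) = (1 - Real.exp (μ * (lam - 1))) / μ := by
  rw [← integral_Ioc_eq_integral_Ioo, ← intervalIntegral.integral_of_le h]
  have : ∀ t ∈ Set.uIcc lam 1, HasDerivAt (fun t => Real.exp (μ * (t - 1)) / μ)
      (Real.exp (μ * (t - 1))) t := by
    intro t _
    have h1 : HasDerivAt (fun t : ℝ => μ * (t - 1)) μ t := by
      simpa using ((hasDerivAt_id t).sub_const 1).const_mul μ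
    have := (h1.exp).div_const μ
    simpa [mul_comm, mul_div_assoc, mul_div_cancel_left₀ _ hμ.ne'] using this
  rw [intervalIntegral.integral_eq_sub_of_hasDerivAt this (by
    apply Continuous.intervalIntegrable; continuity)]
  field_simp
  simp

theorem Dker_lower_bound'
    (φ : ℝ → ℝ) (hφ : IntegrableOn φ (Ioo (0:ℝ) 1))
    (lam C₀ : ℝ) (hlam : lam ∈ Ioo (0:ℝ) 1) (hC₀ : 0 < C₀)
    (hH : ∀ᵐ t ∂(volume.restrict (Ioo lam 1)), C₀ ≤ φ t) :
    ∃ R₁ > 0, ∀ (α : ℝ) (n : ℤ), (R₁ ≤ |α| ∨ R₁ ≤ |(n:ℝ)|) →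
      C₀ / (2 * (α^2 + (n:ℝ)^2 * Real.pi^2)) ≤ ∫ t in Set.Ioo (0:ℝ) 1,
        Real.exp ((α^2 + (n:ℝ)^2 * Real.pi^2) * (t - 1)) * φ t := by
  obtain ⟨hlam0, hlam1⟩ := hlam
  set δ : ℝ := 1 - lam with hδdef
  have hδ : 0 < δ := by simp only [hδdef]; linarith
  set M : ℝ := ∫ t in Ioo (0:ℝ) 1, |φ t| with hMdef
  have hM0 : 0 ≤ M := integral_nonneg fun t => abs_nonneg _
  -- eventual smallness
  have htend : Tendsto (fun μ : ℝ => Real.exp (-(δ * μ)) * (C₀ + μ * M)) atTop (𝓝 0) := by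
    have h1 : Tendsto (fun μ : ℝ => δ * μ) atTop atTop :=
      Tendsto.const_mul_atTop hδ tendsto_id
    have h2 : Tendsto (fun x : ℝ => Real.exp (-x) * C₀) atTop (𝓝 0) := by
      simpa using (Real.tendsto_exp_neg_atTop_nhds_zero).mul_const C₀
    have h3 : Tendsto (fun x : ℝ => x * Real.exp (-x) * (M / δ)) atTop (𝓝 0) := by
      simpa using (tendsto_pow_mul_exp_neg_atTop_nhds_zero 1).mul_const (M / δ)
    have h4 := ((h2.comp h1).add (h3.comp h1))
    simp only [Function.comp, add_zero] at h4
    refine h4.congr fun μ => ?_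
    field_simp
  have hev : ∀ᶠ μ in atTop, Real.exp (-(δ * μ)) * (C₀ + μ * M) ≤ C₀ / 2 := by
    have := htend.eventually (eventually_le_nhds (show (0:ℝ) < C₀/2 by positivity))
    simpa using this
  obtain ⟨X, hX⟩ := eventually_atTop.mp hev
  refine ⟨Real.sqrt (max X 1), Real.sqrt_pos.mpr (by positivity), ?_⟩
  intro α n hR
  set μ : ℝ := α^2 + (n:ℝ)^2 * Real.pi^2 with hμdef
  have hπ1 : (1:ℝ) ≤ Real.pi^2 := by nlinarith [Real.pi_gt_three]
  have hsq : (Real.sqrt (max X 1))^2 = max X 1 := Real.sq_sqrt (by positivity)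
  have hμX : max X 1 ≤ μ := by
    rcases hR with h | h
    · have := Real.sqrt_nonneg (max X 1)
      nlinarith [sq_abs α, sq_nonneg ((n:ℝ) * Real.pi), sq_nonneg (n:ℝ)]
    · have := Real.sqrt_nonneg (max X 1)
      nlinarith [sq_abs (n:ℝ), sq_nonneg α, sq_nonneg (n:ℝ)]
  have hμ1 : (1:ℝ) ≤ μ := le_trans (le_max_right _ _) hμX
  have hμ0 : 0 < μ := lt_of_lt_of_le one_pos hμ1
  have hsmall : Real.exp (-(δ * μ)) * (C₀ + μ * M) ≤ C₀ / 2 :=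
    hX μ (le_trans (le_max_left _ _) hμX)
  set E : ℝ := Real.exp (-(δ * μ)) with hEdef
  have hE0 : 0 < E := Real.exp_pos _
  -- integrability of the integrand on (0,1)
  have hg_int : IntegrableOn (fun t => Real.exp (μ * (t - 1)) * φ t) (Ioo (0:ℝ) 1) := by
    refine hφ.bdd_mul (c := 1) ?_ ?_
    · exact (Real.continuous_exp.comp (by fun_prop)).aestronglyMeasurable
    · filter_upwards [ae_restrict_mem measurableSet_Ioo] with t ht
      rw [Real.norm_eq_abs, abs_of_pos (Real.exp_pos _)]
      exact Real.exp_le_one_iff.mpr (by nlinarith [ht.2])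
  have hsplit : Ioc (0:ℝ) lam ∪ Ioo lam 1 = Ioo (0:ℝ) 1 :=
    Set.Ioc_union_Ioo_eq_Ioo hlam0.le hlam1
  have hdisj : Disjoint (Ioc (0:ℝ) lam) (Ioo lam 1) := by
    rw [Set.disjoint_left]
    rintro x ⟨_, h2⟩ ⟨h3, _⟩
    exact absurd h2 (not_le.mpr h3)
  have hA_int : IntegrableOn (fun t => Real.exp (μ * (t - 1)) * φ t) (Ioc (0:ℝ) lam) :=
    hg_int.mono_set (by rw [← hsplit]; exact Set.subset_union_left)
  have hB_int : IntegrableOn (fun t => Real.exp (μ * (t - 1)) * φ t) (Ioo lam 1) :=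
    hg_int.mono_set (by rw [← hsplit]; exact Set.subset_union_right)
  have habs_int : IntegrableOn (fun t => |φ t|) (Ioo (0:ℝ) 1) := hφ.abs
  have hDsplit : ∫ t in Ioo (0:ℝ) 1, Real.exp (μ * (t - 1)) * φ t
      = (∫ t in Ioc (0:ℝ) lam, Real.exp (μ * (t - 1)) * φ t)
        + ∫ t in Ioo lam 1, Real.exp (μ * (t - 1)) * φ t := by
    rw [← hsplit, setIntegral_union hdisj measurableSet_Ioo hA_int hB_int]
  -- bound on (0, lam]
  have hA : -(E * M) ≤ ∫ t in Ioc (0:ℝ) lam, Real.exp (μ * (t - 1)) * φ t := by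
    have h1 : |∫ t in Ioc (0:ℝ) lam, Real.exp (μ * (t - 1)) * φ t|
        ≤ ∫ t in Ioc (0:ℝ) lam, Real.exp (μ * (t - 1)) * |φ t| := by
      simpa [Real.norm_eq_abs] using
        norm_integral_le_integral_norm (μ := volume.restrict (Ioc (0:ℝ) lam))
          (fun t => Real.exp (μ * (t - 1)) * φ t)
    have habsIoc : IntegrableOn (fun t => |φ t|) (Ioc (0:ℝ) lam) :=
      habs_int.mono_set (by intro x hx; exact ⟨hx.1, lt_of_le_of_lt hx.2 hlam1⟩)
    have h2 : ∫ t in Ioc (0:ℝ) lam, Real.exp (μ * (t - 1)) * |φ t|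
        ≤ ∫ t in Ioc (0:ℝ) lam, E * |φ t| := by
      refine setIntegral_mono_on ?_ (habsIoc.const_mul E) measurableSet_Ioc ?_
      · refine habsIoc.bdd_mul (c := 1) ?_ ?_
        · exact (Real.continuous_exp.comp (by fun_prop)).aestronglyMeasurable
        · filter_upwards [ae_restrict_mem measurableSet_Ioc] with t ht
          rw [Real.norm_eq_abs, abs_of_pos (Real.exp_pos _)]
          exact Real.exp_le_one_iff.mpr (by nlinarith [ht.2])
      intro t ht
      refine mul_le_mul_of_nonneg_right ?_ (abs_nonneg _)
      refine Real.exp_le_exp.mpr ?_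
      have := ht.2
      simp only [hδdef]
      nlinarith
    have h3 : ∫ t in Ioc (0:ℝ) lam, E * |φ t| = E * ∫ t in Ioc (0:ℝ) lam, |φ t| :=
      integral_const_mul E _
    have h4 : ∫ t in Ioc (0:ℝ) lam, |φ t| ≤ M := by
      refine setIntegral_mono_set habs_int ?_ ?_
      · filter_upwards with t using abs_nonneg _
      · exact HasSubset.Subset.eventuallyLE (by intro x hx; exact ⟨hx.1, lt_of_le_of_lt hx.2 hlam1⟩)
    have h5 : |∫ t in Ioc (0:ℝ) lam, Real.exp (μ * (t - 1)) * φ t| ≤ E * M := by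
      refine le_trans h1 (le_trans h2 ?_)
      rw [h3]
      exact mul_le_mul_of_nonneg_left h4 hE0.le
    calc -(E * M) ≤ -|∫ t in Ioc (0:ℝ) lam, Real.exp (μ * (t - 1)) * φ t| := by linarith
      _ ≤ _ := neg_abs_le _
  -- bound on (lam, 1)
  have hexp_int : IntegrableOn (fun t => Real.exp (μ * (t - 1))) (Ioo lam 1) :=
    ((Real.continuous_exp.comp (by fun_prop : Continuous fun t : ℝ => μ * (t - 1))).integrableOn_Icc).mono_set
      Set.Ioo_subset_Icc_self
  have hB : C₀ * ((1 - Real.exp (μ * (lam - 1))) / μ)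
      ≤ ∫ t in Ioo lam 1, Real.exp (μ * (t - 1)) * φ t := by
    rw [← exp_int' μ lam hμ0 hlam1.le, ← integral_const_mul]
    refine integral_mono_ae (hexp_int.const_mul C₀) hB_int ?_
    filter_upwards [hH] with t ht
    rw [mul_comm C₀]
    exact mul_le_mul_of_nonneg_left ht (Real.exp_pos _).le
  have hexpE : Real.exp (μ * (lam - 1)) = E := by
    rw [hEdef]; congr 1; simp only [hδdef]; ring
  rw [hexpE] at hB
  clear_value E M μ δ
  have key : C₀ / (2 * μ) ≤ -(E * M) + C₀ * ((1 - E) / μ) := by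
    rw [div_le_iff₀ (by positivity)]
    have heq : (-(E * M) + C₀ * ((1 - E) / μ)) * (2 * μ)
        = 2 * (-(E * M) * μ) + 2 * (C₀ * (1 - E)) := by field_simp
    rw [heq]
    nlinarith [hsmall]
  rw [hDsplit]
  exact le_trans key (add_le_add hA hB)

end Aux

/-- If `φ ∈ L¹(0,1)` satisfies `φ(t) ≥ C₀` for a.e. `t ∈ (λ,1)` with `λ ∈ (0,1)`, `C₀ > 0`,
then there is `R₁ > 0` such that `D(φ)(α,n) ≥ C₀/(2(α²+n²π²))` whenever `|α| ≥ R₁` or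
`|n| ≥ R₁`. -/
theorem Dker_lower_bound
    (φ : ℝ → ℝ) (hφ : IntegrableOn φ (Ioo (0:ℝ) 1))
    (lam C₀ : ℝ) (hlam : lam ∈ Ioo (0:ℝ) 1) (hC₀ : 0 < C₀)
    (hH : ∀ᵐ t ∂(volume.restrict (Ioo lam 1)), C₀ ≤ φ t) :
    ∃ R₁ > 0, ∀ (α : ℝ) (n : ℤ), (R₁ ≤ |α| ∨ R₁ ≤ |(n:ℝ)|) →
      C₀ / (2 * (α^2 + (n:ℝ)^2 * Real.pi^2)) ≤ Dker φ α n := by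
  simpa [Dker] using Dker_lower_bound' φ hφ lam C₀ hlam hC₀ hH
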